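/- For every integer n ≥ 1: the zigzag snake graph Z_n has exactly n−1 internal edges (namely the sides shared by consecutive tiles); every perfect matching of Z_n contains at most one internal edge; for each internal edge e of Z_n there is exactly one perfect matching of Z_n containing e; and exactly two perfect matchings of Z_n contain no internal edge, and these two matchings are disjoint with union equal to the set of boundary edges of Z_n. -/

import Mathlib

namespace Zigzag

/-- `cpt i` is the distinguished corner `c_i` of the `i`-th tile (for `1 ≤ i`):
`c_1 = (0,0)` and, for `1 ≤ i`, `c_{i+1} = c_i + (0,1)` if `i` is odd and
`c_{i+1} = c_i + (1,0)` if `i` is even. -/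
def cpt : ℕ → ℤ × ℤ
  | 0 => (0, 0)
  | 1 => (0, 0)
  | i + 2 => cpt (i + 1) + (if (i + 1) % 2 = 1 then ((0 : ℤ), (1 : ℤ)) else ((1 : ℤ), (0 : ℤ)))

/-- The `i`-th tile: the four lattice points `{c_i, c_i+(1,0), c_i+(0,1), c_i+(1,1)}`. -/
def tile (i : ℕ) : Set (ℤ × ℤ) :=
  {cpt i, cpt i + (1, 0), cpt i + (0, 1), cpt i + (1, 1)}

/-- The vertex set of the zigzag snake graph `Z n`: the union of the `n` tiles. -/
def Vset (n : ℕ) : Set (ℤ × ℤ) := ⋃ i ∈ Set.Icc 1 n, tile i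

/-- The zigzag snake graph `Z n`: two lattice points are adjacent exactly when they lie at
Euclidean distance 1 from each other and both belong to a common tile. -/
def Zgraph (n : ℕ) : SimpleGraph (ℤ × ℤ) where
  Adj a b := ((a.1 - b.1) ^ 2 + (a.2 - b.2) ^ 2 = 1) ∧
    ∃ i : ℕ, 1 ≤ i ∧ i ≤ n ∧ a ∈ tile i ∧ b ∈ tile i
  symm := by
    constructor
    rintro a b ⟨hd, i, hi1, hi2, ha, hb⟩
    exact ⟨by linear_combination hd, i, hi1, hi2, hb, ha⟩
  loopless := by
    constructor
    rintro a ⟨hd, -⟩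
    simp at hd

/-- A perfect matching of `Z n`: a set of edges of `Z n` such that every vertex of `Z n`
belongs to exactly one edge of the set. -/
def IsPerfectMatching (n : ℕ) (M : Set (Sym2 (ℤ × ℤ))) : Prop :=
  M ⊆ (Zgraph n).edgeSet ∧ ∀ v ∈ Vset n, ∃! e, e ∈ M ∧ v ∈ e

end Zigzag


namespace Zigzag

/-- An edge of `Z n` is internal if its two endpoints both belong to each of two
distinct tiles. -/
def IsInternalEdge (n : ℕ) (e : Sym2 (ℤ × ℤ)) : Prop :=
  e ∈ (Zgraph n).edgeSet ∧ ∃ i j : ℕ, 1 ≤ i ∧ i ≤ n ∧ 1 ≤ j ∧ j ≤ n ∧ i ≠ j ∧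
    ∀ v ∈ e, v ∈ tile i ∧ v ∈ tile j

/-- An edge of `Z n` is a boundary edge if it is not internal. -/
def IsBoundaryEdge (n : ℕ) (e : Sym2 (ℤ × ℤ)) : Prop :=
  e ∈ (Zgraph n).edgeSet ∧ ¬ IsInternalEdge n e

end Zigzag
namespace Zigzag

/-- Lower chain vertex. -/
def LL (m : ℕ) : ℤ × ℤ := ((((m+1)/2 : ℕ) : ℤ), ((m/2 : ℕ) : ℤ))
/-- Upper chain vertex. -/
def UU (m : ℕ) : ℤ × ℤ := (((m/2 : ℕ) : ℤ), (((m+1)/2 + 1 : ℕ) : ℤ))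

def Ltop (n : ℕ) : ℕ := 2 * ((n+1)/2)
def Utop (n : ℕ) : ℕ := 2 * (n/2)

/-- Cross edge `f t` between tiles `t` and `t+1`. -/
def ff (t : ℕ) : Sym2 (ℤ × ℤ) := s(LL (Ltop t), UU (Utop t))

lemma LL_val (k : ℕ) : LL (2*k) = ((k:ℤ), (k:ℤ)) ∧ LL (2*k+1) = ((k:ℤ)+1, (k:ℤ)) := by
  unfold LL
  constructor <;> (refine Prod.ext ?_ ?_ <;> · show ((_ : ℕ) : ℤ) = _; push_cast [Nat.add_div]; omega)

lemma UU_val (k : ℕ) : UU (2*k) = ((k:ℤ), (k:ℤ)+1) ∧ UU (2*k+1) = ((k:ℤ), (k:ℤ)+2) := by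
  unfold UU
  constructor <;> (refine Prod.ext ?_ ?_ <;> · show ((_ : ℕ) : ℤ) = _; push_cast [Nat.add_div]; omega)

lemma LL_inj {a b : ℕ} (h : LL a = LL b) : a = b := by
  have h1 : (((a+1)/2 : ℕ) : ℤ) = ((b+1)/2 : ℕ) := congrArg Prod.fst h
  have h2 : ((a/2 : ℕ) : ℤ) = ((b/2 : ℕ) : ℤ) := congrArg Prod.snd h
  omega

lemma UU_inj {a b : ℕ} (h : UU a = UU b) : a = b := by
  have h1 : ((a/2 : ℕ) : ℤ) = ((b/2 : ℕ) : ℤ) := congrArg Prod.fst h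
  have h2 : (((a+1)/2 + 1 : ℕ) : ℤ) = ((b+1)/2 + 1 : ℕ) := congrArg Prod.snd h
  omega

lemma LL_ne_UU {a b : ℕ} : LL a ≠ UU b := by
  intro h
  have h1 : (((a+1)/2 : ℕ) : ℤ) = ((b/2 : ℕ) : ℤ) := congrArg Prod.fst h
  have h2 : ((a/2 : ℕ) : ℤ) = ((b+1)/2 + 1 : ℕ) := congrArg Prod.snd h
  omega

lemma cpt_step (i : ℕ) : cpt (i+2) = cpt (i+1) + (if (i + 1) % 2 = 1 then ((0 : ℤ), (1 : ℤ)) else ((1 : ℤ), (0 : ℤ))) := rfl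

lemma cpt_val (k : ℕ) : cpt (2*k+1) = ((k:ℤ), (k:ℤ)) ∧ cpt (2*k+2) = ((k:ℤ), (k:ℤ)+1) := by
  induction k with
  | zero =>
    refine ⟨rfl, ?_⟩
    rw [show 2*0+2 = 0+2 by norm_num, cpt_step]
    norm_num [cpt, Prod.ext_iff]
  | succ k ih =>
    have h1 : cpt (2*(k+1)+1) = ((k:ℤ)+1, (k:ℤ)+1) := by
      rw [show 2*(k+1)+1 = (2*k+1)+2 by ring, cpt_step, show (2*k+1)+1 = 2*k+2 by ring, ih.2,
        if_neg (by omega : ¬ (2*k+1+1) % 2 = 1)]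
      simp [Prod.ext_iff]
    refine ⟨by push_cast at h1 ⊢; exact h1, ?_⟩
    rw [show 2*(k+1)+2 = (2*k+2)+2 by ring, cpt_step, show (2*k+2)+1 = 2*(k+1)+1 by ring, h1,
      if_pos (by omega : (2*(k+1)+1) % 2 = 1)]
    norm_num [Prod.ext_iff]

lemma tile_odd (k : ℕ) :
    tile (2*k+1) = {LL (2*k), LL (2*k+1), UU (2*k), LL (2*k+2)} := by
  rw [tile, (cpt_val k).1, (LL_val k).1, (LL_val k).2, (UU_val k).1,
    show 2*k+2 = 2*(k+1) by ring, (LL_val (k+1)).1]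
  ext x
  simp only [Set.mem_insert_iff, Set.mem_singleton_iff, Prod.mk_add_mk, Prod.ext_iff]
  push_cast
  constructor <;> (rintro (h|h|h|h) <;> omega)

lemma tile_even (k : ℕ) :
    tile (2*k+2) = {UU (2*k), LL (2*k+2), UU (2*k+1), UU (2*k+2)} := by
  rw [tile, (cpt_val k).2, (UU_val k).1, (UU_val k).2,
    show 2*k+2 = 2*(k+1) by ring, (LL_val (k+1)).1, (UU_val (k+1)).1]
  ext x
  simp only [Set.mem_insert_iff, Set.mem_singleton_iff, Prod.mk_add_mk, Prod.ext_iff]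
  push_cast
  constructor <;> (rintro (h|h|h|h) <;> omega)

end Zigzag
namespace Zigzag

lemma adj_mk {n i : ℕ} {a b : ℤ×ℤ} (h1 : 1 ≤ i) (h2 : i ≤ n) (ha : a ∈ tile i) (hb : b ∈ tile i)
    (hd : (a.1-b.1)^2+(a.2-b.2)^2 = 1) : (Zgraph n).Adj a b := ⟨hd, i, h1, h2, ha, hb⟩

lemma Ltop_def (n : ℕ) : Ltop n = 2 * ((n+1)/2) := rfl
lemma Utop_def (n : ℕ) : Utop n = 2 * (n/2) := rfl

lemma ff_even (k : ℕ) : ff (2*k) = s(LL (2*k), UU (2*k)) := by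
  unfold ff
  rw [show Ltop (2*k) = 2*k by unfold Ltop; omega, show Utop (2*k) = 2*k by unfold Utop; omega]

lemma ff_odd (k : ℕ) : ff (2*k+1) = s(LL (2*k+2), UU (2*k)) := by
  unfold ff
  rw [show Ltop (2*k+1) = 2*k+2 by unfold Ltop; omega, show Utop (2*k+1) = 2*k by unfold Utop; omega]

lemma mem_edge_LL {n m : ℕ} (h : m+1 ≤ Ltop n) : s(LL m, LL (m+1)) ∈ (Zgraph n).edgeSet := by
  rw [Ltop_def] at h
  rw [SimpleGraph.mem_edgeSet]
  rcases (by omega : m % 2 = 0 ∨ m % 2 = 1) with hp | hp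
  · obtain ⟨k, rfl⟩ : ∃ k, m = 2*k := ⟨m/2, by omega⟩
    refine adj_mk (i := 2*k+1) (by omega) (by omega) ?_ ?_ ?_
    · rw [tile_odd]; simp
    · rw [tile_odd]; simp
    · rw [(LL_val k).1, (LL_val k).2]; norm_num
  · obtain ⟨k, rfl⟩ : ∃ k, m = 2*k+1 := ⟨m/2, by omega⟩
    refine adj_mk (i := 2*k+1) (by omega) (by omega) ?_ ?_ ?_
    · rw [tile_odd]; simp
    · rw [tile_odd, show 2*k+1+1 = 2*k+2 by ring]; simp
    · rw [(LL_val k).2, show 2*k+1+1 = 2*(k+1) by ring, (LL_val (k+1)).1]; norm_num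

lemma mem_edge_UU {n m : ℕ} (h : m+1 ≤ Utop n) : s(UU m, UU (m+1)) ∈ (Zgraph n).edgeSet := by
  rw [Utop_def] at h
  rw [SimpleGraph.mem_edgeSet]
  rcases (by omega : m % 2 = 0 ∨ m % 2 = 1) with hp | hp
  · obtain ⟨k, rfl⟩ : ∃ k, m = 2*k := ⟨m/2, by omega⟩
    refine adj_mk (i := 2*k+2) (by omega) (by omega) ?_ ?_ ?_
    · rw [tile_even]; simp
    · rw [tile_even]; simp
    · rw [(UU_val k).1, (UU_val k).2]; norm_num
  · obtain ⟨k, rfl⟩ : ∃ k, m = 2*k+1 := ⟨m/2, by omega⟩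
    refine adj_mk (i := 2*k+2) (by omega) (by omega) ?_ ?_ ?_
    · rw [tile_even]; simp
    · rw [tile_even, show 2*k+1+1 = 2*k+2 by ring]; simp
    · rw [(UU_val k).2, show 2*k+1+1 = 2*(k+1) by ring, (UU_val (k+1)).1]; push_cast; ring_nf

lemma mem_edge_ff {n i : ℕ} (hn : 1 ≤ n) (h : i ≤ n) : ff i ∈ (Zgraph n).edgeSet := by
  rcases (by omega : i % 2 = 1 ∨ (i % 2 = 0 ∧ 1 ≤ i) ∨ i = 0) with hp | ⟨hp, hp1⟩ | rfl
  · obtain ⟨k, rfl⟩ : ∃ k, i = 2*k+1 := ⟨i/2, by omega⟩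
    rw [ff_odd, SimpleGraph.mem_edgeSet]
    refine adj_mk (i := 2*k+1) (by omega) (by omega) ?_ ?_ ?_
    · rw [tile_odd]; simp
    · rw [tile_odd]; simp
    · rw [show 2*k+2 = 2*(k+1) by ring, (LL_val (k+1)).1, (UU_val k).1]; norm_num
  · obtain ⟨k, rfl⟩ : ∃ k, i = 2*k+2 := ⟨i/2 - 1, by omega⟩
    rw [show (2*k+2 : ℕ) = 2*(k+1) by ring, ff_even, SimpleGraph.mem_edgeSet]
    refine adj_mk (i := 2*k+2) (by omega) (by omega) ?_ ?_ ?_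
    · rw [tile_even, show 2*(k+1) = 2*k+2 by ring]; simp
    · rw [tile_even, show 2*(k+1) = 2*k+2 by ring]; simp
    · rw [(LL_val (k+1)).1, (UU_val (k+1)).1]; norm_num
  · rw [show (0:ℕ) = 2*0 by ring, ff_even, SimpleGraph.mem_edgeSet]
    refine adj_mk (i := 1) (by omega) (by omega) ?_ ?_ ?_
    · rw [show (1:ℕ) = 2*0+1 by ring, tile_odd]; simp
    · rw [show (1:ℕ) = 2*0+1 by ring, tile_odd]; simp
    · rw [(LL_val 0).1, (UU_val 0).1]; norm_num

lemma mem_V_iff {n : ℕ} (hn : 1 ≤ n) {v : ℤ × ℤ} :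
    v ∈ Vset n ↔ (∃ m, m ≤ Ltop n ∧ v = LL m) ∨ (∃ m, m ≤ Utop n ∧ v = UU m) := by
  rw [Vset]
  simp only [Set.mem_iUnion, Set.mem_Icc, exists_prop]
  constructor
  · rintro ⟨i, ⟨hi1, hin⟩, hv⟩
    rcases (by omega : i % 2 = 1 ∨ i % 2 = 0) with hp | hp
    on_goal 1 => obtain ⟨k, rfl⟩ : ∃ k, i = 2*k+1 := ⟨i/2, by omega⟩
    on_goal 2 => obtain ⟨k, rfl⟩ : ∃ k, i = 2*k+2 := ⟨i/2 - 1, by omega⟩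
    · rw [tile_odd] at hv
      rcases hv with h | h | h | h
      · exact Or.inl ⟨2*k, by rw [Ltop_def]; omega, h⟩
      · exact Or.inl ⟨2*k+1, by rw [Ltop_def]; omega, h⟩
      · exact Or.inr ⟨2*k, by rw [Utop_def]; omega, h⟩
      · exact Or.inl ⟨2*k+2, by rw [Ltop_def]; omega, h⟩
    · rw [tile_even] at hv
      rcases hv with h | h | h | h
      · exact Or.inr ⟨2*k, by rw [Utop_def]; omega, h⟩
      · exact Or.inl ⟨2*k+2, by rw [Ltop_def]; omega, h⟩
      · exact Or.inr ⟨2*k+1, by rw [Utop_def]; omega, h⟩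
      · exact Or.inr ⟨2*k+2, by rw [Utop_def]; omega, h⟩
  · rintro (⟨m, hm, rfl⟩ | ⟨m, hm, rfl⟩)
    · rw [Ltop_def] at hm
      rcases (by omega : m % 2 = 1 ∨ m = 0 ∨ (m % 2 = 0 ∧ 1 ≤ m)) with hp | rfl | ⟨hp, hp1⟩
      on_goal 1 => obtain ⟨k, rfl⟩ : ∃ k, m = 2*k+1 := ⟨m/2, by omega⟩
      on_goal 3 => obtain ⟨k, rfl⟩ : ∃ k, m = 2*k+2 := ⟨m/2 - 1, by omega⟩
      · exact ⟨2*k+1, ⟨by omega, by omega⟩, by rw [tile_odd]; simp⟩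
      · exact ⟨1, ⟨le_refl _, hn⟩, by rw [show (1:ℕ) = 2*0+1 by ring, tile_odd]; simp⟩
      · exact ⟨2*k+1, ⟨by omega, by omega⟩, by rw [tile_odd]; simp⟩
    · rw [Utop_def] at hm
      rcases (by omega : m % 2 = 1 ∨ m % 2 = 0) with hp | hp
      on_goal 1 => obtain ⟨k, rfl⟩ : ∃ k, m = 2*k+1 := ⟨m/2, by omega⟩
      on_goal 2 => obtain ⟨k, rfl⟩ : ∃ k, m = 2*k := ⟨m/2, by omega⟩
      · exact ⟨2*k+2, ⟨by omega, by omega⟩, by rw [tile_even]; simp⟩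
      · by_cases hkn : 2*k+1 ≤ n
        · exact ⟨2*k+1, ⟨by omega, hkn⟩, by rw [tile_odd]; simp⟩
        · refine ⟨2*(k-1)+2, ⟨by omega, by omega⟩, ?_⟩
          rw [tile_even, show 2*(k-1)+2 = 2*k by omega]
          simp
  done

end Zigzag
namespace Zigzag

lemma LL_val2 (k : ℕ) : LL (2*k+2) = ((k:ℤ)+1, (k:ℤ)+1) := by
  rw [show 2*k+2 = 2*(k+1) by ring, (LL_val (k+1)).1]
  constructor <;> push_cast <;> ring

lemma UU_val2 (k : ℕ) : UU (2*k+2) = ((k:ℤ)+1, (k:ℤ)+2) := by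
  rw [show 2*k+2 = 2*(k+1) by ring, (UU_val (k+1)).1]
  constructor <;> push_cast <;> ring

lemma edge_cases {n : ℕ} {e : Sym2 (ℤ × ℤ)} (he : e ∈ (Zgraph n).edgeSet) :
    (∃ m, m+1 ≤ Ltop n ∧ e = s(LL m, LL (m+1))) ∨
    (∃ m, m+1 ≤ Utop n ∧ e = s(UU m, UU (m+1))) ∨
    (∃ i, i ≤ n ∧ e = ff i) := by
  induction e using Sym2.ind with
  | _ a b =>
  rw [SimpleGraph.mem_edgeSet] at he
  obtain ⟨hd, i, hi1, hin, ha, hb⟩ := he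
  rcases (by omega : i % 2 = 1 ∨ i % 2 = 0) with hp | hp
  · obtain ⟨k, rfl⟩ : ∃ k, i = 2*k+1 := ⟨i/2, by omega⟩
    rw [tile_odd] at ha hb
    simp only [Set.mem_insert_iff, Set.mem_singleton_iff] at ha hb
    rcases ha with rfl | rfl | rfl | rfl <;> rcases hb with rfl | rfl | rfl | rfl
    · exfalso; simp only [(LL_val k).1, (LL_val k).2, (UU_val k).1, LL_val2] at hd; ring_nf at hd; omega
    · exact Or.inl ⟨2*k, by rw [Ltop_def]; omega, rfl⟩
    · exact Or.inr (Or.inr ⟨2*k, by omega, by rw [ff_even]⟩)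
    · exfalso; simp only [(LL_val k).1, (LL_val k).2, (UU_val k).1, LL_val2] at hd; ring_nf at hd; omega
    · exact Or.inl ⟨2*k, by rw [Ltop_def]; omega, Sym2.eq_swap⟩
    · exfalso; simp only [(LL_val k).1, (LL_val k).2, (UU_val k).1, LL_val2] at hd; ring_nf at hd; omega
    · exfalso; simp only [(LL_val k).1, (LL_val k).2, (UU_val k).1, LL_val2] at hd; ring_nf at hd; omega
    · exact Or.inl ⟨2*k+1, by rw [Ltop_def]; omega, rfl⟩
    · exact Or.inr (Or.inr ⟨2*k, by omega, by rw [ff_even]; exact Sym2.eq_swap⟩)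
    · exfalso; simp only [(LL_val k).1, (LL_val k).2, (UU_val k).1, LL_val2] at hd; ring_nf at hd; omega
    · exfalso; simp only [(LL_val k).1, (LL_val k).2, (UU_val k).1, LL_val2] at hd; ring_nf at hd; omega
    · exact Or.inr (Or.inr ⟨2*k+1, by omega, by rw [ff_odd]; exact Sym2.eq_swap⟩)
    · exfalso; simp only [(LL_val k).1, (LL_val k).2, (UU_val k).1, LL_val2] at hd; ring_nf at hd; omega
    · exact Or.inl ⟨2*k+1, by rw [Ltop_def]; omega, Sym2.eq_swap⟩
    · exact Or.inr (Or.inr ⟨2*k+1, by omega, by rw [ff_odd]⟩)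
    · exfalso; simp only [(LL_val k).1, (LL_val k).2, (UU_val k).1, LL_val2] at hd; ring_nf at hd; omega
  · obtain ⟨k, rfl⟩ : ∃ k, i = 2*k+2 := ⟨i/2 - 1, by omega⟩
    rw [tile_even] at ha hb
    simp only [Set.mem_insert_iff, Set.mem_singleton_iff] at ha hb
    rcases ha with rfl | rfl | rfl | rfl <;> rcases hb with rfl | rfl | rfl | rfl
    · exfalso; simp only [(UU_val k).1, (UU_val k).2, LL_val2, UU_val2] at hd; ring_nf at hd; omega
    · exact Or.inr (Or.inr ⟨2*k+1, by omega, by rw [ff_odd]; exact Sym2.eq_swap⟩)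
    · exact Or.inr (Or.inl ⟨2*k, by rw [Utop_def]; omega, rfl⟩)
    · exfalso; simp only [(UU_val k).1, (UU_val k).2, LL_val2, UU_val2] at hd; ring_nf at hd; omega
    · exact Or.inr (Or.inr ⟨2*k+1, by omega, by rw [ff_odd]⟩)
    · exfalso; simp only [(UU_val k).1, (UU_val k).2, LL_val2, UU_val2] at hd; ring_nf at hd; omega
    · exfalso; simp only [(UU_val k).1, (UU_val k).2, LL_val2, UU_val2] at hd; ring_nf at hd; omega
    · exact Or.inr (Or.inr ⟨2*k+2, by omega, by
        rw [show 2*k+2 = 2*(k+1) by ring, ff_even]⟩)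
    · exact Or.inr (Or.inl ⟨2*k, by rw [Utop_def]; omega, Sym2.eq_swap⟩)
    · exfalso; simp only [(UU_val k).1, (UU_val k).2, LL_val2, UU_val2] at hd; ring_nf at hd; omega
    · exfalso; simp only [(UU_val k).1, (UU_val k).2, LL_val2, UU_val2] at hd; ring_nf at hd; omega
    · exact Or.inr (Or.inl ⟨2*k+1, by rw [Utop_def]; omega, rfl⟩)
    · exfalso; simp only [(UU_val k).1, (UU_val k).2, LL_val2, UU_val2] at hd; ring_nf at hd; omega
    · exact Or.inr (Or.inr ⟨2*k+2, by omega, by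
        rw [show 2*k+2 = 2*(k+1) by ring, ff_even]; exact Sym2.eq_swap⟩)
    · exact Or.inr (Or.inl ⟨2*k+1, by rw [Utop_def]; omega, Sym2.eq_swap⟩)
    · exfalso; simp only [(UU_val k).1, (UU_val k).2, LL_val2, UU_val2] at hd; ring_nf at hd; omega

lemma mem_V_of_edge {n : ℕ} {e : Sym2 (ℤ × ℤ)} (he : e ∈ (Zgraph n).edgeSet)
    {v : ℤ × ℤ} (hv : v ∈ e) : v ∈ Vset n := by
  induction e using Sym2.ind with
  | _ a b =>
  rw [SimpleGraph.mem_edgeSet] at he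
  obtain ⟨hd, i, hi1, hin, ha, hb⟩ := he
  rw [Sym2.mem_iff] at hv
  rw [Vset]
  simp only [Set.mem_iUnion, Set.mem_Icc, exists_prop]
  rcases hv with rfl | rfl
  · exact ⟨i, ⟨hi1, hin⟩, ha⟩
  · exact ⟨i, ⟨hi1, hin⟩, hb⟩

lemma L_opts {n m : ℕ} {e : Sym2 (ℤ × ℤ)} (he : e ∈ (Zgraph n).edgeSet) (hv : LL m ∈ e) :
    (1 ≤ m ∧ e = s(LL (m-1), LL m)) ∨ (m+1 ≤ Ltop n ∧ e = s(LL m, LL (m+1))) ∨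
    (∃ i, i ≤ n ∧ Ltop i = m ∧ e = ff i) := by
  rcases edge_cases he with ⟨m', hb, rfl⟩ | ⟨m', hb, rfl⟩ | ⟨i, hi, rfl⟩
  · rw [Sym2.mem_iff] at hv
    rcases hv with h | h
    · obtain rfl := LL_inj h
      exact Or.inr (Or.inl ⟨hb, rfl⟩)
    · obtain rfl : m = m' + 1 := LL_inj h
      exact Or.inl ⟨by omega, by rw [show m'+1-1 = m' by omega]⟩
  · rw [Sym2.mem_iff] at hv
    rcases hv with h | h <;> exact absurd h LL_ne_UU
  · rw [ff, Sym2.mem_iff] at hv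
    rcases hv with h | h
    · obtain rfl := LL_inj h
      exact Or.inr (Or.inr ⟨i, hi, rfl, rfl⟩)
    · exact absurd h LL_ne_UU

lemma U_opts {n m : ℕ} {e : Sym2 (ℤ × ℤ)} (he : e ∈ (Zgraph n).edgeSet) (hv : UU m ∈ e) :
    (1 ≤ m ∧ e = s(UU (m-1), UU m)) ∨ (m+1 ≤ Utop n ∧ e = s(UU m, UU (m+1))) ∨
    (∃ i, i ≤ n ∧ Utop i = m ∧ e = ff i) := by
  rcases edge_cases he with ⟨m', hb, rfl⟩ | ⟨m', hb, rfl⟩ | ⟨i, hi, rfl⟩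
  · rw [Sym2.mem_iff] at hv
    rcases hv with h | h <;> exact absurd h.symm LL_ne_UU
  · rw [Sym2.mem_iff] at hv
    rcases hv with h | h
    · obtain rfl := UU_inj h
      exact Or.inr (Or.inl ⟨hb, rfl⟩)
    · obtain rfl : m = m' + 1 := UU_inj h
      exact Or.inl ⟨by omega, by rw [show m'+1-1 = m' by omega]⟩
  · rw [ff, Sym2.mem_iff] at hv
    rcases hv with h | h
    · exact absurd h.symm LL_ne_UU
    · obtain rfl := UU_inj h
      exact Or.inr (Or.inr ⟨i, hi, rfl, rfl⟩)

end Zigzag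
namespace Zigzag

/-- The perfect matching of `Z n` containing the cross edge `ff t`. -/
def Pm (t n : ℕ) : Set (Sym2 (ℤ × ℤ)) :=
  {e | e = ff t
    ∨ (∃ m, m+1 ≤ Ltop n ∧ ((m < Ltop t ∧ m % 2 = 0) ∨ (Ltop t < m ∧ m % 2 = 1)) ∧ e = s(LL m, LL (m+1)))
    ∨ (∃ m, m+1 ≤ Utop n ∧ ((m < Utop t ∧ m % 2 = 0) ∨ (Utop t < m ∧ m % 2 = 1)) ∧ e = s(UU m, UU (m+1)))}

lemma mem_Pm_iff {t n : ℕ} {e : Sym2 (ℤ × ℤ)} : e ∈ Pm t n ↔ (e = ff t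
    ∨ (∃ m, m+1 ≤ Ltop n ∧ ((m < Ltop t ∧ m % 2 = 0) ∨ (Ltop t < m ∧ m % 2 = 1)) ∧ e = s(LL m, LL (m+1)))
    ∨ (∃ m, m+1 ≤ Utop n ∧ ((m < Utop t ∧ m % 2 = 0) ∨ (Utop t < m ∧ m % 2 = 1)) ∧ e = s(UU m, UU (m+1)))) :=
  Iff.rfl

lemma Pm_sub {t n : ℕ} (hn : 1 ≤ n) (ht : t ≤ n) : Pm t n ⊆ (Zgraph n).edgeSet := by
  intro e he
  rcases mem_Pm_iff.mp he with rfl | ⟨m, hb, _, rfl⟩ | ⟨m, hb, _, rfl⟩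
  · exact mem_edge_ff hn ht
  · exact mem_edge_LL hb
  · exact mem_edge_UU hb

lemma Pm_disj {t n : ℕ} {e₁ e₂ : Sym2 (ℤ × ℤ)} (h1 : e₁ ∈ Pm t n) (h2 : e₂ ∈ Pm t n)
    {v : ℤ × ℤ} (hv1 : v ∈ e₁) (hv2 : v ∈ e₂) : e₁ = e₂ := by
  have hLt := Ltop_def t
  have hUt := Utop_def t
  rcases mem_Pm_iff.mp h1 with rfl | ⟨m, hb, hc, rfl⟩ | ⟨m, hb, hc, rfl⟩ <;>
    rcases mem_Pm_iff.mp h2 with rfl | ⟨m', hb', hc', rfl⟩ | ⟨m', hb', hc', rfl⟩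
  · rfl
  · exfalso
    rw [ff, Sym2.mem_iff] at hv1
    rw [Sym2.mem_iff] at hv2
    rcases hv1 with h | h <;> rcases hv2 with h' | h'
    · have := LL_inj (h.symm.trans h'); omega
    · have := LL_inj (h.symm.trans h'); omega
    · exact LL_ne_UU (h'.symm.trans h)
    · exact LL_ne_UU (h'.symm.trans h)
  · exfalso
    rw [ff, Sym2.mem_iff] at hv1
    rw [Sym2.mem_iff] at hv2
    rcases hv1 with h | h <;> rcases hv2 with h' | h'
    · exact LL_ne_UU (h.symm.trans h')
    · exact LL_ne_UU (h.symm.trans h')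
    · have := UU_inj (h.symm.trans h'); omega
    · have := UU_inj (h.symm.trans h'); omega
  · exfalso
    rw [ff, Sym2.mem_iff] at hv2
    rw [Sym2.mem_iff] at hv1
    rcases hv1 with h | h <;> rcases hv2 with h' | h'
    · have := LL_inj (h.symm.trans h'); omega
    · exact LL_ne_UU (h.symm.trans h')
    · have := LL_inj (h.symm.trans h'); omega
    · exact LL_ne_UU (h.symm.trans h')
  · rw [Sym2.mem_iff] at hv1 hv2
    have : m = m' := by
      rcases hv1 with h | h <;> rcases hv2 with h' | h' <;> have := LL_inj (h.symm.trans h') <;> omega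
    subst this; rfl
  · exfalso
    rw [Sym2.mem_iff] at hv1 hv2
    rcases hv1 with h | h <;> rcases hv2 with h' | h' <;> exact LL_ne_UU (h.symm.trans h')
  · exfalso
    rw [ff, Sym2.mem_iff] at hv2
    rw [Sym2.mem_iff] at hv1
    rcases hv1 with h | h <;> rcases hv2 with h' | h'
    · exact LL_ne_UU (h'.symm.trans h)
    · have := UU_inj (h.symm.trans h'); omega
    · exact LL_ne_UU (h'.symm.trans h)
    · have := UU_inj (h.symm.trans h'); omega
  · exfalso
    rw [Sym2.mem_iff] at hv1 hv2
    rcases hv1 with h | h <;> rcases hv2 with h' | h' <;> exact LL_ne_UU (h'.symm.trans h)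
  · rw [Sym2.mem_iff] at hv1 hv2
    have : m = m' := by
      rcases hv1 with h | h <;> rcases hv2 with h' | h' <;> have := UU_inj (h.symm.trans h') <;> omega
    subst this; rfl

lemma Pm_cover {t n : ℕ} (hn : 1 ≤ n) (ht : t ≤ n) {v : ℤ × ℤ} (hv : v ∈ Vset n) :
    ∃ e, e ∈ Pm t n ∧ v ∈ e := by
  have hLt := Ltop_def t
  have hUt := Utop_def t
  have hLn := Ltop_def n
  have hUn := Utop_def n
  rcases (mem_V_iff hn).mp hv with ⟨m, hm, rfl⟩ | ⟨m, hm, rfl⟩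
  · rcases (by omega :
      m = Ltop t ∨ ((m < Ltop t ∧ m % 2 = 0) ∨ (Ltop t < m ∧ m % 2 = 1)) ∨
        (((m < Ltop t ∧ m % 2 = 1) ∨ (Ltop t < m ∧ m % 2 = 0)) ∧ 1 ≤ m)) with
      rfl | hst | ⟨hen, h1m⟩
    · exact ⟨ff t, Or.inl rfl, by rw [ff, Sym2.mem_iff]; exact Or.inl rfl⟩
    · refine ⟨s(LL m, LL (m+1)), Or.inr (Or.inl ⟨m, by omega, hst, rfl⟩), ?_⟩
      rw [Sym2.mem_iff]; exact Or.inl rfl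
    · obtain ⟨j, rfl⟩ : ∃ j, m = j+1 := ⟨m-1, by omega⟩
      refine ⟨s(LL j, LL (j+1)), Or.inr (Or.inl ⟨j, by omega, by omega, rfl⟩), ?_⟩
      rw [Sym2.mem_iff]; exact Or.inr rfl
  · rcases (by omega :
      m = Utop t ∨ ((m < Utop t ∧ m % 2 = 0) ∨ (Utop t < m ∧ m % 2 = 1)) ∨
        (((m < Utop t ∧ m % 2 = 1) ∨ (Utop t < m ∧ m % 2 = 0)) ∧ 1 ≤ m)) with
      rfl | hst | ⟨hen, h1m⟩
    · exact ⟨ff t, Or.inl rfl, by rw [ff, Sym2.mem_iff]; exact Or.inr rfl⟩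
    · refine ⟨s(UU m, UU (m+1)), Or.inr (Or.inr ⟨m, by omega, hst, rfl⟩), ?_⟩
      rw [Sym2.mem_iff]; exact Or.inl rfl
    · obtain ⟨j, rfl⟩ : ∃ j, m = j+1 := ⟨m-1, by omega⟩
      refine ⟨s(UU j, UU (j+1)), Or.inr (Or.inr ⟨j, by omega, by omega, rfl⟩), ?_⟩
      rw [Sym2.mem_iff]; exact Or.inr rfl

lemma Pm_perfect {t n : ℕ} (hn : 1 ≤ n) (ht : t ≤ n) : IsPerfectMatching n (Pm t n) := by
  refine ⟨Pm_sub hn ht, fun v hv => ?_⟩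
  obtain ⟨e, he, hve⟩ := Pm_cover hn ht (t := t) hv
  exact ⟨e, ⟨he, hve⟩, fun e' ⟨he', hve'⟩ => Pm_disj he' he hve' hve⟩

end Zigzag
namespace Zigzag

lemma uniq_at {n : ℕ} {M : Set (Sym2 (ℤ × ℤ))} (hM : IsPerfectMatching n M)
    {v : ℤ × ℤ} (hv : v ∈ Vset n) {e e' : Sym2 (ℤ × ℤ)} (he : e ∈ M) (he' : e' ∈ M)
    (h1 : v ∈ e) (h2 : v ∈ e') : e = e' := by
  obtain ⟨u, -, hu⟩ := hM.2 v hv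
  rw [hu e ⟨he, h1⟩, hu e' ⟨he', h2⟩]

lemma LL_mem_V {n m : ℕ} (hn : 1 ≤ n) (h : m ≤ Ltop n) : LL m ∈ Vset n :=
  (mem_V_iff hn).mpr (Or.inl ⟨m, h, rfl⟩)

lemma UU_mem_V {n m : ℕ} (hn : 1 ≤ n) (h : m ≤ Utop n) : UU m ∈ Vset n :=
  (mem_V_iff hn).mpr (Or.inr ⟨m, h, rfl⟩)

lemma exists_cross {n : ℕ} {M : Set (Sym2 (ℤ × ℤ))} (hn : 1 ≤ n) (hM : IsPerfectMatching n M) :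
    ∃ t, t ≤ n ∧ ff t ∈ M := by
  by_contra hno
  push_neg at hno
  have key : ∀ j, 2*j ≤ Ltop n → 2*j+1 ≤ Ltop n ∧ s(LL (2*j), LL (2*j+1)) ∈ M := by
    intro j
    induction j with
    | zero =>
      intro hj
      obtain ⟨e, ⟨he, hve⟩, -⟩ := hM.2 (LL 0) (LL_mem_V hn (by omega))
      rcases L_opts (hM.1 he) hve with ⟨h1, rfl⟩ | ⟨hb, rfl⟩ | ⟨i, hi, hLt, rfl⟩
      · omega
      · exact ⟨hb, he⟩
      · exact absurd he (hno i hi)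
    | succ j ih =>
      intro hj
      obtain ⟨hb', hprev⟩ := ih (by omega)
      obtain ⟨e, ⟨he, hve⟩, -⟩ := hM.2 (LL (2*(j+1))) (LL_mem_V hn (by omega))
      rcases L_opts (hM.1 he) hve with ⟨h1, rfl⟩ | ⟨hb, rfl⟩ | ⟨i, hi, hLt, rfl⟩
      · exfalso
        have hmem1 : LL (2*j+1) ∈ s(LL (2*(j+1)-1), LL (2*(j+1))) := by
          rw [Sym2.mem_iff]; left; exact congrArg LL (by omega)
        have hmem2 : LL (2*j+1) ∈ s(LL (2*j), LL (2*j+1)) := by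
          rw [Sym2.mem_iff]; right; rfl
        have heq := uniq_at hM (LL_mem_V hn (by omega)) he hprev hmem1 hmem2
        have : LL (2*(j+1)) ∈ s(LL (2*j), LL (2*j+1)) := heq ▸ hve
        rw [Sym2.mem_iff] at this
        rcases this with h | h <;> (have := LL_inj h; omega)
      · exact ⟨hb, he⟩
      · exact absurd he (hno i hi)
  have h1 := key ((Ltop n)/2) (by have := Ltop_def n; omega)
  have := Ltop_def n
  omega

lemma force_L_up {n : ℕ} {M : Set (Sym2 (ℤ × ℤ))} (hn : 1 ≤ n) (hM : IsPerfectMatching n M)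
    {b : ℕ} (hb2 : b % 2 = 0) {e0 : Sym2 (ℤ × ℤ)} (he0 : e0 ∈ M) (hb : LL b ∈ e0)
    (hone : ∀ m, LL m ∈ e0 → m = b) :
    ∀ j, j % 2 = 1 → b < j → j + 1 ≤ Ltop n → s(LL j, LL (j+1)) ∈ M := by
  intro j
  induction j using Nat.strong_induction_on with
  | _ j ih =>
  intro hj2 hbj hjn
  obtain ⟨e, ⟨he, hve⟩, -⟩ := hM.2 (LL j) (LL_mem_V hn (by omega))
  rcases L_opts (hM.1 he) hve with ⟨h1, rfl⟩ | ⟨hbd, rfl⟩ | ⟨i, hi, hLt, rfl⟩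
  · exfalso
    by_cases hjb : j - 1 = b
    · have hmem : LL b ∈ s(LL (j-1), LL j) := by rw [Sym2.mem_iff]; left; rw [hjb]
      have heq := uniq_at hM (LL_mem_V hn (by omega)) he he0 hmem hb
      have : LL j ∈ e0 := heq ▸ hve
      have := hone _ this
      omega
    · have hprev := ih (j-2) (by omega) (by omega) (by omega) (by omega)
      have hmem1 : LL (j-1) ∈ s(LL (j-1), LL j) := by rw [Sym2.mem_iff]; left; rfl
      have hmem2 : LL (j-1) ∈ s(LL (j-2), LL (j-2+1)) := by
        rw [Sym2.mem_iff]; right; exact congrArg LL (by omega)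
      have heq := uniq_at hM (LL_mem_V hn (by omega)) he hprev hmem1 hmem2
      have : LL j ∈ s(LL (j-2), LL (j-2+1)) := heq ▸ hve
      rw [Sym2.mem_iff] at this
      rcases this with h | h <;> (have := LL_inj h; omega)
  · exact he
  · exfalso; have := Ltop_def i; omega

lemma force_L_down {n : ℕ} {M : Set (Sym2 (ℤ × ℤ))} (hn : 1 ≤ n) (hM : IsPerfectMatching n M)
    {b : ℕ} (hb2 : b % 2 = 0) {e0 : Sym2 (ℤ × ℤ)} (he0 : e0 ∈ M) (hb : LL b ∈ e0)
    (hbn : b ≤ Ltop n) (hone : ∀ m, LL m ∈ e0 → m = b) :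
    ∀ j, j % 2 = 0 → j + 1 < b → s(LL j, LL (j+1)) ∈ M := by
  have key : ∀ d j, j % 2 = 0 → j + 1 + d = b → s(LL j, LL (j+1)) ∈ M := by
    intro d
    induction d using Nat.strong_induction_on with
    | _ d ih =>
    intro j hj2 hjd
    obtain ⟨e, ⟨he, hve⟩, -⟩ := hM.2 (LL (j+1)) (LL_mem_V hn (by omega))
    rcases L_opts (hM.1 he) hve with ⟨h1, rfl⟩ | ⟨hbd, rfl⟩ | ⟨i, hi, hLt, rfl⟩
    · -- e = s(LL (j+1-1), LL (j+1)) is the goal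
      have : j+1-1 = j := by omega
      rw [this] at he
      exact he
    · exfalso
      by_cases hd1 : d = 1
      · have hmem : LL b ∈ s(LL (j+1), LL (j+1+1)) := by
          rw [Sym2.mem_iff]; right; congr 1; omega
        have heq := uniq_at hM (LL_mem_V hn (by omega)) he he0 hmem hb
        have : LL (j+1) ∈ e0 := heq ▸ (by rw [Sym2.mem_iff]; left; rfl :
          LL (j+1) ∈ s(LL (j+1), LL (j+1+1)))
        have := hone _ this
        omega
      · have hprev := ih (d-2) (by omega) (j+2) (by omega) (by omega)
        have hmem1 : LL (j+2) ∈ s(LL (j+1), LL (j+1+1)) := by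
          rw [Sym2.mem_iff]; right; exact congrArg LL (by omega)
        have hmem2 : LL (j+2) ∈ s(LL (j+2), LL (j+2+1)) := by
          rw [Sym2.mem_iff]; left; rfl
        have heq := uniq_at hM (LL_mem_V hn (by omega)) he hprev hmem1 hmem2
        have : LL (j+1) ∈ s(LL (j+2), LL (j+2+1)) := heq ▸ (by rw [Sym2.mem_iff]; left; rfl :
          LL (j+1) ∈ s(LL (j+1), LL (j+1+1)))
        rw [Sym2.mem_iff] at this
        rcases this with h | h <;> (have := LL_inj h; omega)
    · exfalso; have := Ltop_def i; omega
  intro j hj2 hjb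
  exact key (b - (j+1)) j hj2 (by omega)

lemma force_U_up {n : ℕ} {M : Set (Sym2 (ℤ × ℤ))} (hn : 1 ≤ n) (hM : IsPerfectMatching n M)
    {b : ℕ} (hb2 : b % 2 = 0) {e0 : Sym2 (ℤ × ℤ)} (he0 : e0 ∈ M) (hb : UU b ∈ e0)
    (hone : ∀ m, UU m ∈ e0 → m = b) :
    ∀ j, j % 2 = 1 → b < j → j + 1 ≤ Utop n → s(UU j, UU (j+1)) ∈ M := by
  intro j
  induction j using Nat.strong_induction_on with
  | _ j ih =>
  intro hj2 hbj hjn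
  obtain ⟨e, ⟨he, hve⟩, -⟩ := hM.2 (UU j) (UU_mem_V hn (by omega))
  rcases U_opts (hM.1 he) hve with ⟨h1, rfl⟩ | ⟨hbd, rfl⟩ | ⟨i, hi, hLt, rfl⟩
  · exfalso
    by_cases hjb : j - 1 = b
    · have hmem : UU b ∈ s(UU (j-1), UU j) := by rw [Sym2.mem_iff]; left; rw [hjb]
      have heq := uniq_at hM (UU_mem_V hn (by omega)) he he0 hmem hb
      have : UU j ∈ e0 := heq ▸ hve
      have := hone _ this
      omega
    · have hprev := ih (j-2) (by omega) (by omega) (by omega) (by omega)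
      have hmem1 : UU (j-1) ∈ s(UU (j-1), UU j) := by rw [Sym2.mem_iff]; left; rfl
      have hmem2 : UU (j-1) ∈ s(UU (j-2), UU (j-2+1)) := by
        rw [Sym2.mem_iff]; right; exact congrArg UU (by omega)
      have heq := uniq_at hM (UU_mem_V hn (by omega)) he hprev hmem1 hmem2
      have : UU j ∈ s(UU (j-2), UU (j-2+1)) := heq ▸ hve
      rw [Sym2.mem_iff] at this
      rcases this with h | h <;> (have := UU_inj h; omega)
  · exact he
  · exfalso; have := Utop_def i; omega

lemma force_U_down {n : ℕ} {M : Set (Sym2 (ℤ × ℤ))} (hn : 1 ≤ n) (hM : IsPerfectMatching n M)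
    {b : ℕ} (hb2 : b % 2 = 0) {e0 : Sym2 (ℤ × ℤ)} (he0 : e0 ∈ M) (hb : UU b ∈ e0)
    (hbn : b ≤ Utop n) (hone : ∀ m, UU m ∈ e0 → m = b) :
    ∀ j, j % 2 = 0 → j + 1 < b → s(UU j, UU (j+1)) ∈ M := by
  have key : ∀ d j, j % 2 = 0 → j + 1 + d = b → s(UU j, UU (j+1)) ∈ M := by
    intro d
    induction d using Nat.strong_induction_on with
    | _ d ih =>
    intro j hj2 hjd
    obtain ⟨e, ⟨he, hve⟩, -⟩ := hM.2 (UU (j+1)) (UU_mem_V hn (by omega))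
    rcases U_opts (hM.1 he) hve with ⟨h1, rfl⟩ | ⟨hbd, rfl⟩ | ⟨i, hi, hLt, rfl⟩
    · have : j+1-1 = j := by omega
      rw [this] at he
      exact he
    · exfalso
      by_cases hd1 : d = 1
      · have hmem : UU b ∈ s(UU (j+1), UU (j+1+1)) := by
          rw [Sym2.mem_iff]; right; congr 1; omega
        have heq := uniq_at hM (UU_mem_V hn (by omega)) he he0 hmem hb
        have : UU (j+1) ∈ e0 := heq ▸ (by rw [Sym2.mem_iff]; left; rfl :
          UU (j+1) ∈ s(UU (j+1), UU (j+1+1)))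
        have := hone _ this
        omega
      · have hprev := ih (d-2) (by omega) (j+2) (by omega) (by omega)
        have hmem1 : UU (j+2) ∈ s(UU (j+1), UU (j+1+1)) := by
          rw [Sym2.mem_iff]; right; exact congrArg UU (by omega)
        have hmem2 : UU (j+2) ∈ s(UU (j+2), UU (j+2+1)) := by
          rw [Sym2.mem_iff]; left; rfl
        have heq := uniq_at hM (UU_mem_V hn (by omega)) he hprev hmem1 hmem2
        have : UU (j+1) ∈ s(UU (j+2), UU (j+2+1)) := heq ▸ (by rw [Sym2.mem_iff]; left; rfl :
          UU (j+1) ∈ s(UU (j+1), UU (j+1+1)))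
        rw [Sym2.mem_iff] at this
        rcases this with h | h <;> (have := UU_inj h; omega)
    · exfalso; have := Utop_def i; omega
  intro j hj2 hjb
  exact key (b - (j+1)) j hj2 (by omega)

lemma classify {n : ℕ} {M : Set (Sym2 (ℤ × ℤ))} (hn : 1 ≤ n) (hM : IsPerfectMatching n M) :
    ∃ t, t ≤ n ∧ M = Pm t n := by
  obtain ⟨t, htn, hft⟩ := exists_cross hn hM
  refine ⟨t, htn, ?_⟩
  have honeL : ∀ m', LL m' ∈ ff t → m' = Ltop t := by
    intro m' hm'
    rw [ff, Sym2.mem_iff] at hm'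
    rcases hm' with h | h
    exacts [LL_inj h, absurd h LL_ne_UU]
  have honeU : ∀ m', UU m' ∈ ff t → m' = Utop t := by
    intro m' hm'
    rw [ff, Sym2.mem_iff] at hm'
    rcases hm' with h | h
    exacts [absurd h.symm LL_ne_UU, UU_inj h]
  have hbL : LL (Ltop t) ∈ ff t := by rw [ff, Sym2.mem_iff]; left; rfl
  have hbU : UU (Utop t) ∈ ff t := by rw [ff, Sym2.mem_iff]; right; rfl
  have hLtn : Ltop t ≤ Ltop n := by have := Ltop_def t; have := Ltop_def n; omega
  have hUtn : Utop t ≤ Utop n := by have := Utop_def t; have := Utop_def n; omega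
  have hPsub : Pm t n ⊆ M := by
    intro e he
    rcases mem_Pm_iff.mp he with rfl | ⟨m, hbnd, hc, rfl⟩ | ⟨m, hbnd, hc, rfl⟩
    · exact hft
    · rcases hc with ⟨hlt, hp⟩ | ⟨hgt, hp⟩
      · exact force_L_down hn hM (by have := Ltop_def t; omega) hft hbL hLtn honeL m hp
          (by have := Ltop_def t; omega)
      · exact force_L_up hn hM (by have := Ltop_def t; omega) hft hbL honeL m hp hgt hbnd
    · rcases hc with ⟨hlt, hp⟩ | ⟨hgt, hp⟩
      · exact force_U_down hn hM (by have := Utop_def t; omega) hft hbU hUtn honeU m hp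
          (by have := Utop_def t; omega)
      · exact force_U_up hn hM (by have := Utop_def t; omega) hft hbU honeU m hp hgt hbnd
  refine Set.Subset.antisymm ?_ hPsub
  intro e he
  induction e using Sym2.ind with
  | _ a b =>
  have hv : a ∈ Vset n := mem_V_of_edge (hM.1 he) (Sym2.mem_mk_left a b)
  obtain ⟨e', he', hve'⟩ := Pm_cover hn htn hv
  have heq := uniq_at hM hv he (hPsub he') (Sym2.mem_mk_left a b) hve'
  rw [heq]
  exact he'

end Zigzag
namespace Zigzag

lemma mem_tile_iff {i : ℕ} {v : ℤ × ℤ} :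
    v ∈ tile i ↔ ((cpt i).1 ≤ v.1 ∧ v.1 ≤ (cpt i).1 + 1 ∧ (cpt i).2 ≤ v.2 ∧ v.2 ≤ (cpt i).2 + 1) := by
  rw [tile]
  simp only [Set.mem_insert_iff, Set.mem_singleton_iff, Prod.ext_iff, Prod.fst_add, Prod.snd_add]
  norm_num
  omega

lemma unit_step {dx dy : ℤ} (hx : -1 ≤ dx ∧ dx ≤ 1) (hy : -1 ≤ dy ∧ dy ≤ 1)
    (h : dx^2 + dy^2 = 1) :
    (dx = 0 ∧ (dy = 1 ∨ dy = -1)) ∨ (dy = 0 ∧ (dx = 1 ∨ dx = -1)) := by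
  rcases (by omega : dx = -1 ∨ dx = 0 ∨ dx = 1) with rfl|rfl|rfl <;>
    rcases (by omega : dy = -1 ∨ dy = 0 ∨ dy = 1) with rfl|rfl|rfl <;> norm_num at *

lemma cross_aux {n : ℕ} {a b : ℤ×ℤ} {i j : ℕ} (hi1 : 1 ≤ i) (hij : i < j) (hjn : j ≤ n)
    (hai : a ∈ tile i) (haj : a ∈ tile j) (hbi : b ∈ tile i) (hbj : b ∈ tile j)
    (hne : a ≠ b) (hd : (a.1-b.1)^2+(a.2-b.2)^2 = 1) : i + 1 ≤ n ∧ s(a,b) = ff i := by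
  obtain ⟨x1, y1⟩ := a
  obtain ⟨x2, y2⟩ := b
  simp only at hd
  have hne' : ¬(x1 = x2 ∧ y1 = y2) := fun ⟨h1, h2⟩ => hne (by rw [h1, h2])
  rw [mem_tile_iff] at hai haj hbi hbj
  rcases (by omega : i % 2 = 1 ∨ i % 2 = 0) with hp | hp
  · obtain ⟨k, rfl⟩ : ∃ k, i = 2*k+1 := ⟨i/2, by omega⟩
    rw [(cpt_val k).1] at hai hbi
    simp only at hai hbi
    have hstep := unit_step (dx := x1 - x2) (dy := y1 - y2) (by omega) (by omega) hd
    rcases (by omega : j % 2 = 1 ∨ j % 2 = 0) with hq | hq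
    · exfalso
      obtain ⟨l, rfl⟩ : ∃ l, j = 2*l+1 := ⟨j/2, by omega⟩
      rw [(cpt_val l).1] at haj hbj
      simp only at haj hbj
      omega
    · obtain ⟨l, rfl⟩ : ∃ l, j = 2*l+2 := ⟨j/2 - 1, by omega⟩
      rw [(cpt_val l).2] at haj hbj
      simp only at haj hbj
      refine ⟨by omega, ?_⟩
      have hfin : (x1 = (k:ℤ) ∧ y1 = (k:ℤ)+1 ∧ x2 = (k:ℤ)+1 ∧ y2 = (k:ℤ)+1) ∨
          (x1 = (k:ℤ)+1 ∧ y1 = (k:ℤ)+1 ∧ x2 = (k:ℤ) ∧ y2 = (k:ℤ)+1) := by omega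
      rw [ff_odd, LL_val2, (UU_val k).1]
      rcases hfin with ⟨e1, e2, e3, e4⟩ | ⟨e1, e2, e3, e4⟩ <;> subst e1 <;> subst e2 <;>
        subst e3 <;> subst e4
      · exact Sym2.eq_swap
      · rfl
  · obtain ⟨k, rfl⟩ : ∃ k, i = 2*k+2 := ⟨i/2 - 1, by omega⟩
    rw [(cpt_val k).2] at hai hbi
    simp only at hai hbi
    have hstep := unit_step (dx := x1 - x2) (dy := y1 - y2) (by omega) (by omega) hd
    rcases (by omega : j % 2 = 1 ∨ j % 2 = 0) with hq | hq
    · obtain ⟨l, rfl⟩ : ∃ l, j = 2*l+1 := ⟨j/2, by omega⟩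
      rw [(cpt_val l).1] at haj hbj
      simp only at haj hbj
      refine ⟨by omega, ?_⟩
      have hfin : (x1 = (k:ℤ)+1 ∧ y1 = (k:ℤ)+1 ∧ x2 = (k:ℤ)+1 ∧ y2 = (k:ℤ)+2) ∨
          (x1 = (k:ℤ)+1 ∧ y1 = (k:ℤ)+2 ∧ x2 = (k:ℤ)+1 ∧ y2 = (k:ℤ)+1) := by omega
      rw [show 2*k+2 = 2*(k+1) by ring, ff_even, (LL_val (k+1)).1, (UU_val (k+1)).1]
      push_cast
      rcases hfin with ⟨e1, e2, e3, e4⟩ | ⟨e1, e2, e3, e4⟩ <;> subst e1 <;> subst e2 <;>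
        subst e3 <;> subst e4
      · rfl
      · exact Sym2.eq_swap
    · exfalso
      obtain ⟨l, rfl⟩ : ∃ l, j = 2*l+2 := ⟨j/2 - 1, by omega⟩
      rw [(cpt_val l).2] at haj hbj
      simp only at haj hbj
      omega

lemma internal_iff {n : ℕ} {e : Sym2 (ℤ × ℤ)} (hn : 1 ≤ n) :
    IsInternalEdge n e ↔ ∃ i, 1 ≤ i ∧ i + 1 ≤ n ∧ e = ff i := by
  constructor
  · rintro ⟨he, i, j, hi1, hin, hj1, hjn, hij, hmem⟩
    induction e using Sym2.ind with
    | _ a b =>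
    rw [SimpleGraph.mem_edgeSet] at he
    have hne : a ≠ b := (Zgraph n).ne_of_adj he
    have hd := he.1
    obtain ⟨hai, haj⟩ := hmem a (Sym2.mem_mk_left a b)
    obtain ⟨hbi, hbj⟩ := hmem b (Sym2.mem_mk_right a b)
    rcases lt_or_gt_of_ne hij with h | h
    · obtain ⟨h1, h2⟩ := cross_aux hi1 h hjn hai haj hbi hbj hne hd
      exact ⟨i, hi1, h1, h2⟩
    · obtain ⟨h1, h2⟩ := cross_aux hj1 h hin haj hai hbj hbi hne hd
      exact ⟨j, hj1, h1, h2⟩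
  · rintro ⟨i, hi1, hin, rfl⟩
    refine ⟨mem_edge_ff hn (by omega), i, i+1, hi1, by omega, by omega, by omega, by omega, ?_⟩
    intro v hv
    rcases (by omega : i % 2 = 1 ∨ i % 2 = 0) with hp | hp
    · obtain ⟨k, rfl⟩ : ∃ k, i = 2*k+1 := ⟨i/2, by omega⟩
      rw [ff_odd, Sym2.mem_iff] at hv
      rcases hv with rfl | rfl
      · constructor
        · rw [tile_odd]; simp
        · rw [show 2*k+1+1 = 2*k+2 by ring, tile_even]; simp
      · constructor
        · rw [tile_odd]; simp
        · rw [show 2*k+1+1 = 2*k+2 by ring, tile_even]; simp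
    · obtain ⟨k, rfl⟩ : ∃ k, i = 2*k+2 := ⟨i/2 - 1, by omega⟩
      rw [show 2*k+2 = 2*(k+1) by ring, ff_even, Sym2.mem_iff] at hv
      rcases hv with rfl | rfl
      · constructor
        · rw [tile_even]; simp [show 2*(k+1) = 2*k+2 by ring]
        · rw [show 2*k+2+1 = 2*(k+1)+1 by ring, tile_odd]; simp
      · constructor
        · rw [tile_even]; simp [show 2*(k+1) = 2*k+2 by ring]
        · rw [show 2*k+2+1 = 2*(k+1)+1 by ring, tile_odd]; simp

lemma ff_inj {i j : ℕ} (h : ff i = ff j) : i = j := by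
  rw [ff, ff, Sym2.eq_iff] at h
  rcases h with ⟨h1, h2⟩ | ⟨h1, h2⟩
  · have e1 := LL_inj h1
    have e2 := UU_inj h2
    have := Ltop_def i; have := Ltop_def j; have := Utop_def i; have := Utop_def j
    omega
  · exact absurd h1 LL_ne_UU

lemma ff_mem_Pm {i t n : ℕ} (h : ff i ∈ Pm t n) : i = t := by
  rcases mem_Pm_iff.mp h with h | ⟨m, _, _, h⟩ | ⟨m, _, _, h⟩
  · exact ff_inj h
  · rw [ff, Sym2.eq_iff] at h
    rcases h with ⟨h1, h2⟩ | ⟨h1, h2⟩ <;>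
      first
        | exact absurd h1 LL_ne_UU | exact absurd h1.symm LL_ne_UU
        | exact absurd h2 LL_ne_UU | exact absurd h2.symm LL_ne_UU
  · rw [ff, Sym2.eq_iff] at h
    rcases h with ⟨h1, h2⟩ | ⟨h1, h2⟩ <;>
      first
        | exact absurd h1 LL_ne_UU | exact absurd h1.symm LL_ne_UU
        | exact absurd h2 LL_ne_UU | exact absurd h2.symm LL_ne_UU

end Zigzag
namespace Zigzag

lemma Ltop_zero : Ltop 0 = 0 := rfl
lemma Utop_zero : Utop 0 = 0 := rfl

lemma Pm_inter {n : ℕ} (hn : 1 ≤ n) : Pm n n ∩ Pm 0 n = ∅ := by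
  ext e
  simp only [Set.mem_inter_iff, Set.mem_empty_iff_false, iff_false]
  rintro ⟨h1, h2⟩
  rcases mem_Pm_iff.mp h1 with rfl | ⟨m, hb, hc, rfl⟩ | ⟨m, hb, hc, rfl⟩
  · have := ff_mem_Pm h2; omega
  · rcases mem_Pm_iff.mp h2 with h | ⟨m', hb', hc', he⟩ | ⟨m', hb', hc', he⟩
    · rw [ff, Sym2.eq_iff] at h
      rcases h with ⟨ha, hbb⟩ | ⟨ha, hbb⟩ <;>
        first
          | exact absurd ha LL_ne_UU | exact absurd ha.symm LL_ne_UU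
          | exact absurd hbb LL_ne_UU | exact absurd hbb.symm LL_ne_UU
    · rw [Sym2.eq_iff] at he
      have hm : m = m' := by
        rcases he with ⟨ha, hbb⟩ | ⟨ha, hbb⟩
        · exact LL_inj ha
        · have := LL_inj ha; have := LL_inj hbb; omega
      have := Ltop_zero
      omega
    · rw [Sym2.eq_iff] at he
      rcases he with ⟨ha, hbb⟩ | ⟨ha, hbb⟩ <;>
        first
          | exact absurd ha LL_ne_UU | exact absurd ha.symm LL_ne_UU
          | exact absurd hbb LL_ne_UU | exact absurd hbb.symm LL_ne_UU
  · rcases mem_Pm_iff.mp h2 with h | ⟨m', hb', hc', he⟩ | ⟨m', hb', hc', he⟩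
    · rw [ff, Sym2.eq_iff] at h
      rcases h with ⟨ha, hbb⟩ | ⟨ha, hbb⟩ <;>
        first
          | exact absurd ha LL_ne_UU | exact absurd ha.symm LL_ne_UU
          | exact absurd hbb LL_ne_UU | exact absurd hbb.symm LL_ne_UU
    · rw [Sym2.eq_iff] at he
      rcases he with ⟨ha, hbb⟩ | ⟨ha, hbb⟩ <;>
        first
          | exact absurd ha LL_ne_UU | exact absurd ha.symm LL_ne_UU
          | exact absurd hbb LL_ne_UU | exact absurd hbb.symm LL_ne_UU
    · rw [Sym2.eq_iff] at he
      have hm : m = m' := by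
        rcases he with ⟨ha, hbb⟩ | ⟨ha, hbb⟩
        · exact UU_inj ha
        · have := UU_inj ha; have := UU_inj hbb; omega
      have := Utop_zero
      omega

end Zigzag

/-- For every integer `n ≥ 1`: the zigzag snake graph `Z n` has exactly `n - 1` internal
edges; every perfect matching of `Z n` contains at most one internal edge; for each
internal edge `e` of `Z n` there is exactly one perfect matching of `Z n` containing `e`;
and exactly two perfect matchings of `Z n` contain no internal edge, and these two
matchings are disjoint with union equal to the set of boundary edges of `Z n`. -/
theorem statement_1 (n : ℕ) (hn : 1 ≤ n) :
    {e | Zigzag.IsInternalEdge n e}.ncard = n - 1 ∧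
    (∀ M : Set (Sym2 (ℤ × ℤ)), Zigzag.IsPerfectMatching n M →
      ∀ e₁ ∈ M, ∀ e₂ ∈ M, Zigzag.IsInternalEdge n e₁ → Zigzag.IsInternalEdge n e₂ →
        e₁ = e₂) ∧
    (∀ e : Sym2 (ℤ × ℤ), Zigzag.IsInternalEdge n e →
      ∃! M : Set (Sym2 (ℤ × ℤ)), Zigzag.IsPerfectMatching n M ∧ e ∈ M) ∧
    (∃ M₁ M₂ : Set (Sym2 (ℤ × ℤ)), M₁ ≠ M₂ ∧
      Zigzag.IsPerfectMatching n M₁ ∧ Zigzag.IsPerfectMatching n M₂ ∧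
      (∀ e ∈ M₁, ¬ Zigzag.IsInternalEdge n e) ∧
      (∀ e ∈ M₂, ¬ Zigzag.IsInternalEdge n e) ∧
      (∀ M : Set (Sym2 (ℤ × ℤ)), Zigzag.IsPerfectMatching n M →
        (∀ e ∈ M, ¬ Zigzag.IsInternalEdge n e) → M = M₁ ∨ M = M₂) ∧
      M₁ ∩ M₂ = ∅ ∧ M₁ ∪ M₂ = {e | Zigzag.IsBoundaryEdge n e}) := by
  open Zigzag in
  refine ⟨?_, ?_, ?_, ?_⟩
  · -- count of internal edges
    have hset : {e | Zigzag.IsInternalEdge n e} = Zigzag.ff '' Set.Icc 1 (n-1) := by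
      ext e
      simp only [Set.mem_setOf_eq, Set.mem_image, Set.mem_Icc, internal_iff hn]
      constructor
      · rintro ⟨i, h1, h2, rfl⟩; exact ⟨i, ⟨h1, by omega⟩, rfl⟩
      · rintro ⟨i, ⟨h1, h2⟩, rfl⟩; exact ⟨i, h1, by omega, rfl⟩
    rw [hset, Set.ncard_image_of_injOn (fun a _ b _ h => ff_inj h),
      show (Set.Icc 1 (n-1)) = ↑(Finset.Icc 1 (n-1)) from (Finset.coe_Icc 1 (n-1)).symm,
      Set.ncard_coe_finset, Nat.card_Icc]
    omega
  · -- at most one internal edge in a perfect matching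
    intro M hM e₁ h1 e₂ h2 hi1 hi2
    obtain ⟨t, htn, rfl⟩ := classify hn hM
    obtain ⟨i, _, _, rfl⟩ := (internal_iff hn).mp hi1
    obtain ⟨j, _, _, rfl⟩ := (internal_iff hn).mp hi2
    rw [ff_mem_Pm h1, ff_mem_Pm h2]
  · -- unique perfect matching through each internal edge
    intro e hie
    obtain ⟨i, hi1, hin, rfl⟩ := (internal_iff hn).mp hie
    refine ⟨Pm i n, ⟨Pm_perfect hn (by omega), mem_Pm_iff.mpr (Or.inl rfl)⟩, ?_⟩
    rintro M ⟨hM, hfM⟩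
    obtain ⟨t, htn, rfl⟩ := classify hn hM
    rw [ff_mem_Pm hfM]
  · -- the two matchings with no internal edge
    have hnoN : ∀ e ∈ Pm n n, ¬ Zigzag.IsInternalEdge n e := by
      intro e he hie
      obtain ⟨i, hi1, hin, rfl⟩ := (internal_iff hn).mp hie
      have := ff_mem_Pm he
      omega
    have hno0 : ∀ e ∈ Pm 0 n, ¬ Zigzag.IsInternalEdge n e := by
      intro e he hie
      obtain ⟨i, hi1, hin, rfl⟩ := (internal_iff hn).mp hie
      have := ff_mem_Pm he
      omega
    refine ⟨Pm n n, Pm 0 n, ?_, Pm_perfect hn le_rfl, Pm_perfect hn (Nat.zero_le n),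
      hnoN, hno0, ?_, Pm_inter hn, ?_⟩
    · intro h
      have h1 : Zigzag.ff n ∈ Pm n n := mem_Pm_iff.mpr (Or.inl rfl)
      rw [h] at h1
      have := ff_mem_Pm h1
      omega
    · intro M hM hno
      obtain ⟨t, htn, rfl⟩ := classify hn hM
      rcases (by omega : t = n ∨ t = 0 ∨ (1 ≤ t ∧ t+1 ≤ n)) with rfl | rfl | ⟨h1, h2⟩
      · exact Or.inl rfl
      · exact Or.inr rfl
      · exact absurd ((internal_iff hn).mpr ⟨t, h1, h2, rfl⟩)
          (hno (Zigzag.ff t) (mem_Pm_iff.mpr (Or.inl rfl)))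
    · ext e
      simp only [Set.mem_union, Set.mem_setOf_eq]
      constructor
      · rintro (he | he)
        · exact ⟨Pm_sub hn le_rfl he, hnoN e he⟩
        · exact ⟨Pm_sub hn (Nat.zero_le n) he, hno0 e he⟩
      · rintro ⟨he, hni⟩
        rcases edge_cases he with ⟨m, hb, rfl⟩ | ⟨m, hb, rfl⟩ | ⟨i, hi, rfl⟩
        · rcases (by omega : m % 2 = 0 ∨ m % 2 = 1) with hp | hp
          · exact Or.inl (mem_Pm_iff.mpr (Or.inr (Or.inl ⟨m, hb, Or.inl ⟨by omega, hp⟩, rfl⟩)))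
          · refine Or.inr (mem_Pm_iff.mpr (Or.inr (Or.inl ⟨m, hb, Or.inr ⟨?_, hp⟩, rfl⟩)))
            rw [Ltop_zero]; omega
        · rcases (by omega : m % 2 = 0 ∨ m % 2 = 1) with hp | hp
          · exact Or.inl (mem_Pm_iff.mpr (Or.inr (Or.inr ⟨m, hb, Or.inl ⟨by omega, hp⟩, rfl⟩)))
          · refine Or.inr (mem_Pm_iff.mpr (Or.inr (Or.inr ⟨m, hb, Or.inr ⟨?_, hp⟩, rfl⟩)))
            rw [Utop_zero]; omega
        · rcases (by omega : i = n ∨ i = 0 ∨ (1 ≤ i ∧ i+1 ≤ n)) with rfl | rfl | ⟨h1, h2⟩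
          · exact Or.inl (mem_Pm_iff.mpr (Or.inl rfl))
          · exact Or.inr (mem_Pm_iff.mpr (Or.inl rfl))
          · exact absurd ((internal_iff hn).mpr ⟨i, h1, h2, rfl⟩) hni
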